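/- arXiv:math/9406205 — 2 statements merged into one kernel-verified Lean document; each statement's English description precedes it below -/
import Mathlib

section
/- Let A be an m × n integer matrix and let p_1, ..., p_t be distinct primes whose product exceeds the absolute value of every r × r minor of A, where r is the rank of A over ℚ. Then the maximum over i of the rank of A modulo p_i equals r. -/
open Matrix Module Submodule

/-- From a finite family spanning a space of dimension at least `s`, one can
extract `s` members forming a linearly independent family. -/
lemma exists_comp_linearIndependent {K V : Type*} [Field K] [AddCommGroup V] [Module K V]
    {n : Type*} [Fintype n] (v : n → V) (s : ℕ)
    (hs : s ≤ finrank K (span K (Set.range v))) :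
    ∃ g : Fin s → n, LinearIndependent K (v ∘ g) := by
  classical
  obtain ⟨b, hbsub, hbspan, hbli⟩ := exists_linearIndependent K (Set.range v)
  have hbfin : b.Finite := (Set.finite_range v).subset hbsub
  haveI := hbfin.fintype
  have hcard : s ≤ b.toFinset.card := by
    have h1 := finrank_span_set_eq_card hbli
    rw [hbspan] at h1
    omega
  obtain ⟨u, husub, hucard⟩ := Finset.exists_subset_card_eq hcard
  have hcardu : Fintype.card ↥u = s := by rw [Fintype.card_coe, hucard]
  let e : Fin s → ↥u := (Fintype.equivFinOfCardEq hcardu).symm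
  have hmemb : ∀ i : Fin s, ((e i : V)) ∈ b := fun i =>
    Set.mem_toFinset.mp (husub (e i).2)
  have hmemr : ∀ i : Fin s, ((e i : V)) ∈ Set.range v := fun i => hbsub (hmemb i)
  choose g hg using hmemr
  refine ⟨g, ?_⟩
  let emb : Fin s → ↥b := fun i => ⟨e i, hmemb i⟩
  have hembinj : Function.Injective emb := by
    intro i j hij
    have : (e i : V) = (e j : V) := congrArg (fun x => x.1) hij
    exact (Fintype.equivFinOfCardEq hcardu).symm.injective (Subtype.ext this)
  have hli := hbli.comp emb hembinj
  convert hli using 1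
  funext i
  exact hg i

/-- If a matrix over a field has an `s × s` submatrix with nonzero determinant,
then its rank is at least `s`. -/
lemma le_rank_of_det_ne_zero {K : Type*} [Field K] {m n : Type*} [Fintype m] [Fintype n]
    [DecidableEq m] [DecidableEq n] {A : Matrix m n K} {s : ℕ}
    (f : Fin s → m) (g : Fin s → n) (h : (A.submatrix f g).det ≠ 0) :
    s ≤ A.rank := by
  classical
  set Q : Matrix (Fin s) m K := Matrix.of fun k i => if i = f k then 1 else 0 with hQ
  set P : Matrix n (Fin s) K := Matrix.of fun j l => if j = g l then 1 else 0 with hP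
  have hQA : ∀ k j, (Q * A) k j = A (f k) j := by
    intro k j
    simp [Matrix.mul_apply, hQ, ite_mul, one_mul, zero_mul]
  have hQAP : Q * A * P = A.submatrix f g := by
    ext k l
    simp [Matrix.mul_apply, hQA, hP, mul_ite, mul_one, mul_zero]
  have hu : IsUnit (A.submatrix f g) :=
    (Matrix.isUnit_iff_isUnit_det _).mpr (isUnit_iff_ne_zero.mpr h)
  have hrank : (A.submatrix f g).rank = s := by
    rw [Matrix.rank_of_isUnit _ hu, Fintype.card_fin]
  calc s = (Q * A * P).rank := by rw [hQAP, hrank]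
    _ ≤ (Q * A).rank := Matrix.rank_mul_le_left _ _
    _ ≤ A.rank := Matrix.rank_mul_le_right _ _

/-- If a matrix over a field has rank at least `s`, it has an `s × s` submatrix
with nonzero determinant. -/
lemma exists_det_ne_zero_of_le_rank {K : Type*} [Field K] {m n : Type*} [Fintype m] [Fintype n]
    [DecidableEq m] [DecidableEq n] (A : Matrix m n K) (s : ℕ) (h : s ≤ A.rank) :
    ∃ (f : Fin s → m) (g : Fin s → n), (A.submatrix f g).det ≠ 0 := by
  classical
  rw [Matrix.rank_eq_finrank_span_cols] at h
  obtain ⟨g, hg⟩ := exists_comp_linearIndependent Aᵀ s h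
  set B : Matrix m (Fin s) K := A.submatrix id g with hB
  have hBt : Bᵀ = Aᵀ ∘ g := rfl
  have hrB : B.rank = s := by
    rw [Matrix.rank_eq_finrank_span_cols, show B.col = Bᵀ from rfl, hBt, finrank_span_eq_card hg, Fintype.card_fin]
  have hrBt : s ≤ finrank K (span K (Set.range Bᵀᵀ)) := by
    change s ≤ finrank K (span K (Set.range Bᵀ.col))
    rw [← Matrix.rank_eq_finrank_span_cols, Matrix.rank_transpose, hrB]
  obtain ⟨f, hf⟩ := exists_comp_linearIndependent Bᵀᵀ s hrBt
  refine ⟨f, g, ?_⟩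
  have hrows : LinearIndependent K (fun i => (A.submatrix f g) i) := hf
  have hu := Matrix.linearIndependent_rows_iff_isUnit.mp hrows
  exact isUnit_iff_ne_zero.mp ((Matrix.isUnit_iff_isUnit_det _).mp hu)

/-- If `p_1, ..., p_t` are distinct primes whose product exceeds the absolute
value of every `r × r` minor of `A`, where `r` is the rank of `A` over `ℚ`,
then the maximum of the ranks of `A` modulo the `p_i` equals `r`. -/
theorem max_rank_mod_primes_eq_rank (m n t : ℕ)
    (A : Matrix (Fin m) (Fin n) ℤ) (p : Fin t → ℕ)
    (hp : ∀ i, (p i).Prime) (hinj : Function.Injective p)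
    (r : ℕ) (hr : r = (A.map (Int.cast : ℤ → ℚ)).rank)
    (hbig : ∀ (f : Fin r → Fin m) (g : Fin r → Fin n),
      |(A.submatrix f g).det| < ∏ i, (p i : ℤ)) :
    (Finset.univ.sup fun i => (A.map (Int.cast : ℤ → ZMod (p i))).rank) = r := by
  classical
  -- determinant of submatrices commutes with entrywise casting
  have hdetQ : ∀ (s : ℕ) (f : Fin s → Fin m) (g : Fin s → Fin n),
      ((A.map (Int.cast : ℤ → ℚ)).submatrix f g).det = (((A.submatrix f g).det : ℤ) : ℚ) :=
    fun s f g => (RingHom.map_det (Int.castRingHom ℚ) (A.submatrix f g)).symm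
  have hdetZ : ∀ (i : Fin t) (s : ℕ) (f : Fin s → Fin m) (g : Fin s → Fin n),
      ((A.map (Int.cast : ℤ → ZMod (p i))).submatrix f g).det
        = (((A.submatrix f g).det : ℤ) : ZMod (p i)) :=
    fun i s f g => (RingHom.map_det (Int.castRingHom (ZMod (p i))) (A.submatrix f g)).symm
  -- upper bound: every mod-p rank is at most r
  have hle : ∀ i, (A.map (Int.cast : ℤ → ZMod (p i))).rank ≤ r := by
    intro i
    haveI : Fact (p i).Prime := ⟨hp i⟩
    by_contra hlt
    push_neg at hlt
    obtain ⟨f, g, hdne⟩ := exists_det_ne_zero_of_le_rank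
      (A.map (Int.cast : ℤ → ZMod (p i))) (r + 1) hlt
    have hz : (A.submatrix f g).det = 0 := by
      by_contra hD
      have hQ : ((A.map (Int.cast : ℤ → ℚ)).submatrix f g).det ≠ 0 := by
        rw [hdetQ (r + 1) f g]
        exact_mod_cast hD
      have := le_rank_of_det_ne_zero f g hQ
      omega
    apply hdne
    rw [hdetZ i (r + 1) f g, hz]
    simp
  refine le_antisymm (Finset.sup_le fun i _ => hle i) ?_
  -- lower bound
  rcases Nat.eq_zero_or_pos r with hr0 | hrpos
  · simp [hr0]
  obtain ⟨f, g, hQdet⟩ := exists_det_ne_zero_of_le_rank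
    (A.map (Int.cast : ℤ → ℚ)) r hr.le
  set D : ℤ := (A.submatrix f g).det with hD
  have hD0 : D ≠ 0 := by
    intro h0
    apply hQdet
    rw [hdetQ r f g, ← hD, h0]
    simp
  have hex : ∃ i, ¬ ((p i : ℤ) ∣ D) := by
    by_contra hall
    push_neg at hall
    have hndvd : (∏ q ∈ Finset.univ.image p, q) ∣ D.natAbs := by
      refine Finset.prod_primes_dvd _ ?_ ?_
      · intro q hq
        obtain ⟨i, _, rfl⟩ := Finset.mem_image.mp hq
        exact (hp i).prime
      · intro q hq
        obtain ⟨i, _, rfl⟩ := Finset.mem_image.mp hq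
        simpa using Int.natAbs_dvd_natAbs.mpr (hall i)
    have hprodeq : (∏ q ∈ Finset.univ.image p, q) = ∏ i, p i :=
      Finset.prod_image fun i _ j _ h => hinj h
    rw [hprodeq] at hndvd
    have hle' : (∏ i, p i) ≤ D.natAbs := Nat.le_of_dvd (Int.natAbs_pos.mpr hD0) hndvd
    have hlt := hbig f g
    rw [← hD, Int.abs_eq_natAbs] at hlt
    have hcast : (∏ i, (p i : ℤ)) = ((∏ i, p i : ℕ) : ℤ) := by push_cast; ring
    rw [hcast] at hlt
    omega
  obtain ⟨i, hi⟩ := hex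
  haveI : Fact (p i).Prime := ⟨hp i⟩
  have hZdet : ((A.map (Int.cast : ℤ → ZMod (p i))).submatrix f g).det ≠ 0 := by
    rw [hdetZ i r f g]
    intro h0
    exact hi ((ZMod.intCast_zmod_eq_zero_iff_dvd _ _).mp h0)
  exact le_trans (le_rank_of_det_ne_zero f g hZdet)
    (Finset.le_sup (f := fun i => (A.map (Int.cast : ℤ → ZMod (p i))).rank) (Finset.mem_univ i))
end

section
/- Let A be an m × n integer matrix whose cokernel is finite of order dividing S, with S > 0. Then the Smith normal form of A over ℤ can be recovered from the Smith normal form of A over ℤ/Sℤ: the invariant factors of A are the gcds of the corresponding diagonal entries (lifted to ℤ) with S. -/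
lemma prod_dvd_eq {ι : Type*} (s : Finset ι) (a b : ι → ℕ)
    (hd : ∀ j ∈ s, a j ∣ b j) (hp : ∀ j ∈ s, 0 < b j)
    (h : ∏ j ∈ s, a j = ∏ j ∈ s, b j) : ∀ j ∈ s, a j = b j := by
  intro j hj
  by_contra hne
  have hpa : ∀ i ∈ s, 0 < a i := by
    intro i hi
    rcases Nat.eq_zero_or_pos (a i) with h0 | h0
    · exfalso
      have h1 : ∏ j ∈ s, a j = 0 := Finset.prod_eq_zero hi h0
      rw [h] at h1
      exact absurd h1 (Finset.prod_pos hp).ne'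
    · exact h0
  have hlt : a j < b j := lt_of_le_of_ne (Nat.le_of_dvd (hp j hj) (hd j hj)) hne
  have : ∏ i ∈ s, a i < ∏ i ∈ s, b i :=
    Finset.prod_lt_prod hpa (fun i hi => Nat.le_of_dvd (hp i hi) (hd i hi)) ⟨j, hj, hlt⟩
  exact absurd h this.ne

lemma chain_dvd {M : Type*} [Monoid M] {n : ℕ} (d : Fin n → M)
    (h : ∀ (i : ℕ) (h1 : i + 1 < n), d ⟨i, Nat.lt_of_succ_lt h1⟩ ∣ d ⟨i + 1, h1⟩) :
    ∀ j k : Fin n, j ≤ k → d j ∣ d k := by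
  have key : ∀ (b : ℕ) (hb : b < n) (a : ℕ) (ha : a ≤ b), d ⟨a, lt_of_le_of_lt ha hb⟩ ∣ d ⟨b, hb⟩ := by
    intro b
    induction b with
    | zero => intro hb a ha; interval_cases a; exact dvd_refl _
    | succ b ih =>
      intro hb a ha
      rcases Nat.lt_or_ge a (b + 1) with h1 | h1
      · exact dvd_trans (ih (Nat.lt_of_succ_lt hb) a (Nat.lt_succ_iff.mp h1)) (h b hb)
      · have : a = b + 1 := le_antisymm ha h1
        subst this; exact dvd_refl _
  intro j k hjk
  have := key k.val k.isLt j.val hjk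
  simpa using this


-- aux: one-sided divisibility of last entries
lemma last_dvd_last {n S : ℕ} (hS : 0 < S) (D G : Fin (n+1) → ℕ)
    (hDS : ∀ j, D j ∣ S) (hGS : ∀ j, G j ∣ S)
    (hDc : ∀ j k : Fin (n+1), j ≤ k → D j ∣ D k)
    (h : ∀ U, U ∣ S → (∏ j, Nat.gcd (D j) U) = ∏ j, Nat.gcd (G j) U) :
    G (Fin.last n) ∣ D (Fin.last n) := by
  have hGpos : ∀ j, 0 < G j := fun j =>
    Nat.pos_of_ne_zero (fun h0 => hS.ne' (Nat.eq_zero_of_zero_dvd (h0 ▸ hGS j)))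
  have h1 : (∏ j, Nat.gcd (D j) (D (Fin.last n))) = ∏ j, D j := by
    refine Finset.prod_congr rfl fun j _ => Nat.gcd_eq_left (hDc j (Fin.last n) (Fin.le_last j))
  have h2 : (∏ j, Nat.gcd (D j) S) = ∏ j, D j :=
    Finset.prod_congr rfl fun j _ => Nat.gcd_eq_left (hDS j)
  have h3 : (∏ j, Nat.gcd (G j) S) = ∏ j, G j :=
    Finset.prod_congr rfl fun j _ => Nat.gcd_eq_left (hGS j)
  have hprod : (∏ j, Nat.gcd (G j) (D (Fin.last n))) = ∏ j, G j := by
    rw [← h (D (Fin.last n)) (hDS _), h1, ← h2, h S dvd_rfl, h3]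
  have := prod_dvd_eq Finset.univ (fun j => Nat.gcd (G j) (D (Fin.last n))) G
    (fun j _ => Nat.gcd_dvd_left _ _) (fun j _ => hGpos j) hprod (Fin.last n) (Finset.mem_univ _)
  calc G (Fin.last n) = Nat.gcd (G (Fin.last n)) (D (Fin.last n)) := this.symm
    _ ∣ D (Fin.last n) := Nat.gcd_dvd_right _ _

lemma core_eq : ∀ (n S : ℕ), 0 < S → ∀ (D G : Fin n → ℕ),
    (∀ j, D j ∣ S) → (∀ j, G j ∣ S) →
    (∀ j k : Fin n, j ≤ k → D j ∣ D k) → (∀ j k : Fin n, j ≤ k → G j ∣ G k) →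
    (∀ U, U ∣ S → (∏ j, Nat.gcd (D j) U) = ∏ j, Nat.gcd (G j) U) →
    ∀ j, D j = G j := by
  intro n
  induction n with
  | zero => intro S hS D G _ _ _ _ _ j; exact absurd j.isLt (by simp)
  | succ n ih =>
    intro S hS D G hDS hGS hDc hGc h
    have hlast : D (Fin.last n) = G (Fin.last n) :=
      Nat.dvd_antisymm
        (last_dvd_last hS G D hGS hDS hGc (fun U hU => (h U hU).symm))
        (last_dvd_last hS D G hDS hGS hDc h)
    have htail : ∀ j : Fin n, D (Fin.castSucc j) = G (Fin.castSucc j) := by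
      refine ih S hS (D ∘ Fin.castSucc) (G ∘ Fin.castSucc) (fun j => hDS _) (fun j => hGS _)
        (fun j k hjk => hDc _ _ (by simpa using hjk)) (fun j k hjk => hGc _ _ (by simpa using hjk))
        ?_
      intro U hU
      have hU0 : 0 < Nat.gcd (D (Fin.last n)) U := Nat.gcd_pos_of_pos_left _
        (Nat.pos_of_ne_zero (fun h0 => hS.ne' (Nat.eq_zero_of_zero_dvd (h0 ▸ hDS _))))
      have := h U hU
      rw [Fin.prod_univ_castSucc, Fin.prod_univ_castSucc, ← hlast] at this
      exact Nat.eq_of_mul_eq_mul_right hU0 this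
    intro j
    refine Fin.lastCases ?_ ?_ j
    · exact hlast
    · exact htail

lemma card_mul_ker (S : ℕ) (hS : 0 < S) (a : ZMod S) :
    Nat.card {x : ZMod S // a * x = 0} = Nat.gcd a.val S := by
  haveI : NeZero S := ⟨hS.ne'⟩
  set φ : ZMod S →+ ZMod S := AddMonoidHom.mulLeft a with hφ
  have hker : Nat.card {x : ZMod S // a * x = 0} = Nat.card φ.ker := by
    apply Nat.card_congr
    exact Equiv.subtypeEquivRight (fun x => by simp [hφ, AddMonoidHom.mem_ker])
  have hrange : φ.range = AddSubgroup.zmultiples a := by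
    ext x
    constructor
    · rintro ⟨y, rfl⟩
      refine ⟨(y.val : ℤ), ?_⟩
      show (y.val : ℤ) • a = φ y
      simp only [hφ, AddMonoidHom.coe_mulLeft]
      rw [zsmul_eq_mul, Int.cast_natCast, ZMod.natCast_val, ZMod.cast_id, mul_comm]
    · rintro ⟨k, rfl⟩
      exact ⟨(k : ZMod S), by simp [hφ, zsmul_eq_mul, mul_comm]⟩
  have hcard_range : Nat.card φ.range = S / Nat.gcd S a.val := by
    rw [hrange, Nat.card_zmultiples]
    have ha : a = ((a.val : ℕ) : ZMod S) := by rw [ZMod.natCast_val, ZMod.cast_id]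
    conv_lhs => rw [ha]
    exact ZMod.addOrderOf_coe _ hS.ne'
  have hiso : Nat.card (ZMod S ⧸ φ.ker) = Nat.card φ.range :=
    Nat.card_congr (QuotientAddGroup.quotientKerEquivRange φ).toEquiv
  have hlag : Nat.card (ZMod S) = Nat.card (ZMod S ⧸ φ.ker) * Nat.card φ.ker :=
    AddSubgroup.card_eq_card_quotient_mul_card_addSubgroup φ.ker
  rw [Nat.card_zmod, hiso, hcard_range] at hlag
  have hgd : Nat.gcd S a.val ∣ S := Nat.gcd_dvd_left _ _
  have hgpos : 0 < Nat.gcd S a.val := Nat.gcd_pos_of_pos_left _ hS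
  have hq : S / Nat.gcd S a.val * Nat.gcd S a.val = S := Nat.div_mul_cancel hgd
  have hqpos : 0 < S / Nat.gcd S a.val := Nat.div_pos (Nat.le_of_dvd hS hgd) hgpos
  have h5 : S / Nat.gcd S a.val * Nat.gcd S a.val
      = S / Nat.gcd S a.val * Nat.card φ.ker := by rw [hq]; exact hlag
  have h6 := Nat.eq_of_mul_eq_mul_left hqpos h5
  rw [hker, Nat.gcd_comm, ← h6]


lemma ker_card_diag {m n S : ℕ} (hS : 0 < S) (hnm : n ≤ m)
    (Y : Matrix (Fin m) (Fin n) (ZMod S))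
    (hY : ∀ (i : Fin m) (j : Fin n), (i : ℕ) ≠ (j : ℕ) → Y i j = 0) :
    Nat.card {v : Fin n → ZMod S // Y.mulVec v = 0} =
      ∏ j : Fin n, Nat.gcd ((Y ⟨j.val, lt_of_lt_of_le j.isLt hnm⟩ j).val) S := by
  have key : ∀ v : Fin n → ZMod S, Y.mulVec v = 0 ↔
      ∀ j : Fin n, Y ⟨j.val, lt_of_lt_of_le j.isLt hnm⟩ j * v j = 0 := by
    intro v
    constructor
    · intro hv j
      have h1 := congrFun hv ⟨j.val, lt_of_lt_of_le j.isLt hnm⟩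
      rw [Matrix.mulVec, dotProduct] at h1
      rwa [Finset.sum_eq_single j
        (fun k _ hk => by
          rw [hY _ k (fun h => hk (Fin.ext h.symm)), zero_mul])
        (by intro h; exact absurd (Finset.mem_univ j) h)] at h1
    · intro hj
      funext i
      show (Finset.univ.sum fun k => Y i k * v k) = 0
      rcases Nat.lt_or_ge i.val n with hin | hin
      · rw [Finset.sum_eq_single (⟨i.val, hin⟩ : Fin n)
          (fun k _ hk => by
            rw [hY i k (fun h => hk (Fin.ext h.symm)), zero_mul])
          (by intro h; exact absurd (Finset.mem_univ _) h)]
        exact hj ⟨i.val, hin⟩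
      · apply Finset.sum_eq_zero
        intro k _
        rw [hY i k (by omega), zero_mul]
  have e1 : {v : Fin n → ZMod S // Y.mulVec v = 0} ≃
      {v : Fin n → ZMod S // ∀ j, Y ⟨j.val, lt_of_lt_of_le j.isLt hnm⟩ j * v j = 0} :=
    Equiv.subtypeEquivRight key
  have e2 : {v : Fin n → ZMod S // ∀ j, Y ⟨j.val, lt_of_lt_of_le j.isLt hnm⟩ j * v j = 0} ≃
      ∀ j : Fin n, {x : ZMod S // Y ⟨j.val, lt_of_lt_of_le j.isLt hnm⟩ j * x = 0} :=
    @Equiv.subtypePiEquivPi (Fin n) _ (fun j x => Y ⟨j.val, lt_of_lt_of_le j.isLt hnm⟩ j * x = 0)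
  rw [Nat.card_congr (e1.trans e2), Nat.card_pi]
  exact Finset.prod_congr rfl fun j _ => card_mul_ker S hS _

lemma ker_card_equiv {m n : ℕ} {R : Type*} [CommRing R]
    (P : Matrix (Fin m) (Fin m) R) (Q : Matrix (Fin n) (Fin n) R)
    (X : Matrix (Fin m) (Fin n) R) (hP : IsUnit P.det) (hQ : IsUnit Q.det) :
    Nat.card {v : Fin n → R // (P * X * Q).mulVec v = 0} =
      Nat.card {v : Fin n → R // X.mulVec v = 0} := by
  have hPu : IsUnit P := (Matrix.isUnit_iff_isUnit_det P).mpr hP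
  have hQu : IsUnit Q := (Matrix.isUnit_iff_isUnit_det Q).mpr hQ
  obtain ⟨P', hPP', hP'P⟩ :
      ∃ P' : Matrix (Fin m) (Fin m) R, P * P' = 1 ∧ P' * P = 1 := by
    obtain ⟨u, rfl⟩ := hPu
    exact ⟨(u⁻¹ : _), u.mul_inv, u.inv_mul⟩
  obtain ⟨Q', hQQ', hQ'Q⟩ :
      ∃ Q' : Matrix (Fin n) (Fin n) R, Q * Q' = 1 ∧ Q' * Q = 1 := by
    obtain ⟨u, rfl⟩ := hQu
    exact ⟨(u⁻¹ : _), u.mul_inv, u.inv_mul⟩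
  have hPinj : Function.Injective (P.mulVec) := by
    intro x y hxy
    have h2 : P'.mulVec (P.mulVec x) = P'.mulVec (P.mulVec y) := by rw [hxy]
    rwa [Matrix.mulVec_mulVec, Matrix.mulVec_mulVec, hP'P, Matrix.one_mulVec,
      Matrix.one_mulVec] at h2
  apply Nat.card_congr
  refine ⟨fun v => ⟨Q.mulVec v.val, ?_⟩, fun w => ⟨Q'.mulVec w.val, ?_⟩, ?_, ?_⟩
  · obtain ⟨v, hv⟩ := v
    have h1 : P.mulVec (X.mulVec (Q.mulVec v)) = 0 := by
      rw [Matrix.mulVec_mulVec, Matrix.mulVec_mulVec]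
      exact hv
    exact hPinj (h1.trans (Matrix.mulVec_zero P).symm)
  · obtain ⟨w, hw⟩ := w
    show (P * X * Q).mulVec (Q'.mulVec w) = 0
    rw [Matrix.mulVec_mulVec, Matrix.mul_assoc, Matrix.mul_assoc, hQQ', Matrix.mul_one,
      ← Matrix.mulVec_mulVec, hw, Matrix.mulVec_zero]
  · intro v
    ext : 1
    show Q'.mulVec (Q.mulVec v.val) = v.val
    rw [Matrix.mulVec_mulVec, hQ'Q, Matrix.one_mulVec]
  · intro w
    ext : 1
    show Q.mulVec (Q'.mulVec w.val) = w.val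
    rw [Matrix.mulVec_mulVec, hQQ', Matrix.one_mulVec]

-- closure of rows is preserved by left mult by a unit
lemma closure_rows_mul_left {m n : ℕ} (P : Matrix (Fin m) (Fin m) ℤ)
    (M : Matrix (Fin m) (Fin n) ℤ) (hP : IsUnit P.det) :
    AddSubgroup.closure (Set.range fun i => (P * M) i) =
      AddSubgroup.closure (Set.range fun i => M i) := by
  have key : ∀ (P₀ : Matrix (Fin m) (Fin m) ℤ) (M₀ : Matrix (Fin m) (Fin n) ℤ),
      AddSubgroup.closure (Set.range fun i => (P₀ * M₀) i) ≤
        AddSubgroup.closure (Set.range fun i => M₀ i) := by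
    intro P₀ M₀
    rw [AddSubgroup.closure_le]
    rintro _ ⟨i, rfl⟩
    show (P₀ * M₀) i ∈ AddSubgroup.closure (Set.range fun i => M₀ i)
    have hrow : (P₀ * M₀) i = ∑ k : Fin m, P₀ i k • M₀ k := by
      funext j
      simp [Matrix.mul_apply, Finset.sum_apply]
    rw [hrow]
    exact AddSubgroup.sum_mem _ fun k _ =>
      AddSubgroup.zsmul_mem _ (AddSubgroup.subset_closure (Set.mem_range_self k)) _
  have hPu : IsUnit P := (Matrix.isUnit_iff_isUnit_det P).mpr hP
  obtain ⟨u, rfl⟩ := hPu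
  refine le_antisymm (key _ _) ?_
  have : M = (↑u⁻¹ : Matrix (Fin m) (Fin m) ℤ) * ((↑u : Matrix (Fin m) (Fin m) ℤ) * M) := by
    rw [← Matrix.mul_assoc, Units.inv_mul, Matrix.one_mul]
  conv_lhs => rw [this]
  exact key _ _

-- cokernel invariance under P ... Q
noncomputable def cokerEquiv {m n : ℕ} (A B : Matrix (Fin m) (Fin n) ℤ)
    (P : Matrix (Fin m) (Fin m) ℤ) (Q : Matrix (Fin n) (Fin n) ℤ)
    (hP : IsUnit P.det) (hQ : IsUnit Q.det) (hPAQ : P * A * Q = B) :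
    ((Fin n → ℤ) ⧸ AddSubgroup.closure (Set.range fun i => A i)) ≃+
      ((Fin n → ℤ) ⧸ AddSubgroup.closure (Set.range fun i => B i)) := by
  have hQu : IsUnit Q := (Matrix.isUnit_iff_isUnit_det Q).mpr hQ
  set u := hQu.unit with hudef
  have hu : (↑u : Matrix (Fin n) (Fin n) ℤ) = Q := hQu.unit_spec
  let e : (Fin n → ℤ) ≃+ (Fin n → ℤ) :=
    { toFun := fun v => Matrix.vecMul v Q
      invFun := fun v => Matrix.vecMul v (↑u⁻¹ : Matrix (Fin n) (Fin n) ℤ)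
      left_inv := by
        intro v
        simp only
        rw [Matrix.vecMul_vecMul, ← hu, Units.mul_inv, Matrix.vecMul_one]
      right_inv := by
        intro v
        simp only
        rw [Matrix.vecMul_vecMul, ← hu, Units.inv_mul, Matrix.vecMul_one]
      map_add' := fun v w => by
        funext j
        simp [Matrix.vecMul, dotProduct, add_mul, Finset.sum_add_distrib] }
  refine QuotientAddGroup.congr _ _ e ?_
  rw [AddMonoidHom.map_closure]
  have hcomp : ∀ i : Fin m, (⇑(e : (Fin n → ℤ) →+ (Fin n → ℤ)) ∘ fun i => A i) i = (A * Q) i := by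
    intro i
    simp only [Function.comp_apply, AddMonoidHom.coe_coe]
    show Matrix.vecMul (A i) Q = (A * Q) i
    funext j
    simp [Matrix.vecMul, Matrix.mul_apply, dotProduct]
  have himg : (⇑(e : (Fin n → ℤ) →+ (Fin n → ℤ))) '' (Set.range fun i => A i)
      = Set.range fun i => (A * Q) i := by
    rw [← Set.range_comp]
    exact congrArg Set.range (funext hcomp)
  rw [himg, ← hPAQ, Matrix.mul_assoc]
  exact (closure_rows_mul_left P (A * Q) hP).symm

-- cokernel of a diagonal-type matrix
lemma coker_diag_card {m n : ℕ} (hnm : n ≤ m) (B : Matrix (Fin m) (Fin n) ℤ)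
    (hzero : ∀ (i : Fin m) (j : Fin n), (i : ℕ) ≠ (j : ℕ) → B i j = 0)
    (hnonneg : ∀ (i : Fin m) (j : Fin n), (i : ℕ) = (j : ℕ) → 0 ≤ B i j) :
    Nat.card ((Fin n → ℤ) ⧸ AddSubgroup.closure (Set.range fun i => B i)) =
      ∏ j : Fin n, (B ⟨j.val, lt_of_lt_of_le j.isLt hnm⟩ j).natAbs := by
  set D : Fin n → ℕ := fun j => (B ⟨j.val, lt_of_lt_of_le j.isLt hnm⟩ j).natAbs with hD
  have hDcast : ∀ j : Fin n, ((D j : ℤ)) = B ⟨j.val, lt_of_lt_of_le j.isLt hnm⟩ j := fun j =>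
    Int.natAbs_of_nonneg (hnonneg _ j rfl)
  set φ : (Fin n → ℤ) →+ (∀ j : Fin n, ZMod (D j)) :=
    AddMonoidHom.mk' (fun v j => ((v j : ℤ) : ZMod (D j)))
      (by intro v w; funext j; push_cast; simp) with hφ
  have hsurj : Function.Surjective φ := by
    intro x
    have h := fun j => ZMod.intCast_surjective (x j)
    choose y hy using h
    exact ⟨y, funext hy⟩
  have hker : φ.ker = AddSubgroup.closure (Set.range fun i => B i) := by
    have hmem : ∀ v : Fin n → ℤ, v ∈ φ.ker ↔ ∀ j : Fin n, (D j : ℤ) ∣ v j := by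
      intro v
      rw [AddMonoidHom.mem_ker]
      constructor
      · intro h j
        have := congrFun h j
        exact (ZMod.intCast_zmod_eq_zero_iff_dvd _ _).mp this
      · intro h
        funext j
        exact (ZMod.intCast_zmod_eq_zero_iff_dvd _ _).mpr (h j)
    apply le_antisymm
    · intro v hv
      rw [hmem] at hv
      have hsum : v = ∑ j : Fin n, (v j / B ⟨j.val, lt_of_lt_of_le j.isLt hnm⟩ j) •
          B ⟨j.val, lt_of_lt_of_le j.isLt hnm⟩ := by
        funext j'
        rw [Finset.sum_apply]
        rw [Finset.sum_eq_single j'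
          (fun k _ hk => by
            have : B ⟨k.val, lt_of_lt_of_le k.isLt hnm⟩ j' = 0 :=
              hzero _ _ (fun h => hk (Fin.ext h))
            simp [this])
          (by intro h; exact absurd (Finset.mem_univ _) h)]
        have hdvd : B ⟨j'.val, lt_of_lt_of_le j'.isLt hnm⟩ j' ∣ v j' := by
          rw [← hDcast j']; exact hv j'
        simp only [Pi.smul_apply, smul_eq_mul]
        exact (Int.ediv_mul_cancel hdvd).symm
      rw [hsum]
      exact AddSubgroup.sum_mem _ fun j _ =>
        AddSubgroup.zsmul_mem _ (AddSubgroup.subset_closure (Set.mem_range_self _)) _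
    · rw [AddSubgroup.closure_le]
      rintro _ ⟨i, rfl⟩
      show B i ∈ (φ.ker : Set (Fin n → ℤ))
      rw [SetLike.mem_coe, hmem]
      intro j
      rcases Nat.decEq i.val j.val with h | h
      · rw [hzero i j h]; exact dvd_zero _
      · have : i = ⟨j.val, lt_of_lt_of_le j.isLt hnm⟩ := Fin.ext h
        rw [this, hDcast j]
  have := Nat.card_congr (QuotientAddGroup.quotientKerEquivOfSurjective φ hsurj).toEquiv
  rw [hker] at this
  rw [this, Nat.card_pi]
  exact Finset.prod_congr rfl fun j _ => Nat.card_zmod _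

lemma gcd_val_natCast (S : ℕ) (hS : 0 < S) (a : ℕ) :
    Nat.gcd ((a : ZMod S)).val S = Nat.gcd a S := by
  haveI : NeZero S := ⟨hS.ne'⟩
  rw [ZMod.val_natCast, ← Nat.gcd_rec, Nat.gcd_comm]


/-- `B` is in Smith normal form over `ℤ`. -/
def IsSmithNormalForm {m n : ℕ} (B : Matrix (Fin m) (Fin n) ℤ) : Prop :=
  (∀ (i : Fin m) (j : Fin n), (i : ℕ) ≠ (j : ℕ) → B i j = 0) ∧
  (∀ (i : Fin m) (j : Fin n), (i : ℕ) = (j : ℕ) → 0 ≤ B i j) ∧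
  (∀ (i i' : Fin m) (j j' : Fin n), (i : ℕ) = (j : ℕ) →
    (i' : ℕ) = (i : ℕ) + 1 → (j' : ℕ) = (i : ℕ) + 1 → B i j ∣ B i' j')

/-- `B` is in Smith-type diagonal form over `ℤ/Sℤ`: diagonal, with each
diagonal entry dividing the next in `ℤ/Sℤ`. -/
def IsSmithNormalFormMod {m n S : ℕ} (B : Matrix (Fin m) (Fin n) (ZMod S)) : Prop :=
  (∀ (i : Fin m) (j : Fin n), (i : ℕ) ≠ (j : ℕ) → B i j = 0) ∧
  (∀ (i i' : Fin m) (j j' : Fin n), (i : ℕ) = (j : ℕ) →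
    (i' : ℕ) = (i : ℕ) + 1 → (j' : ℕ) = (i : ℕ) + 1 → B i j ∣ B i' j')

/-- If the cokernel of `A` is finite of order dividing `S > 0` (so `A` has full
column rank), then the Smith normal form of `A` over `ℤ` is recovered from a
Smith normal form of `A` over `ℤ/Sℤ`: each invariant factor of `A` is the gcd
of the corresponding diagonal entry (lifted to `ℤ`) with `S`. -/
theorem smith_normal_form_from_modular (m n : ℕ)
    (A : Matrix (Fin m) (Fin n) ℤ) (S : ℕ) (hSpos : 0 < S)
    (hrank : (A.map (Int.cast : ℤ → ℚ)).rank = n)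
    (hfin : Finite ((Fin n → ℤ) ⧸ AddSubgroup.closure (Set.range fun i => A i)))
    (hcard : Nat.card ((Fin n → ℤ) ⧸ AddSubgroup.closure (Set.range fun i => A i)) ∣ S)
    (P : Matrix (Fin m) (Fin m) ℤ) (Q : Matrix (Fin n) (Fin n) ℤ)
    (B : Matrix (Fin m) (Fin n) ℤ)
    (hP : IsUnit P.det) (hQ : IsUnit Q.det) (hPAQ : P * A * Q = B)
    (hB : IsSmithNormalForm B)
    (P' : Matrix (Fin m) (Fin m) (ZMod S)) (Q' : Matrix (Fin n) (Fin n) (ZMod S))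
    (B' : Matrix (Fin m) (Fin n) (ZMod S))
    (hP' : IsUnit P'.det) (hQ' : IsUnit Q'.det)
    (hPAQ' : P' * A.map (Int.cast : ℤ → ZMod S) * Q' = B')
    (hB' : IsSmithNormalFormMod B') :
    ∀ (i : Fin m) (j : Fin n), (i : ℕ) = (j : ℕ) →
      B i j = (Nat.gcd (B' i j).val S : ℤ) := by
  haveI : NeZero S := ⟨hSpos.ne'⟩
  -- n ≤ m
  have hnm : n ≤ m := by
    have h1 := Matrix.rank_le_card_height (A.map (Int.cast : ℤ → ℚ))
    rw [hrank] at h1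
    simpa using h1
  set emb : Fin n → Fin m := fun j => ⟨j.val, lt_of_lt_of_le j.isLt hnm⟩ with hemb
  set D : Fin n → ℕ := fun j => (B (emb j) j).natAbs with hDdef
  set G : Fin n → ℕ := fun j => Nat.gcd (B' (emb j) j).val S with hGdef
  have hDcast : ∀ j : Fin n, ((D j : ℤ)) = B (emb j) j := fun j =>
    Int.natAbs_of_nonneg (hB.2.1 _ j rfl)
  -- product of D divides S
  have hprodD : (∏ j : Fin n, D j) ∣ S := by
    have e1 := Nat.card_congr (cokerEquiv A B P Q hP hQ hPAQ).toEquiv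
    have e2 := coker_diag_card hnm B hB.1 hB.2.1
    rw [e1, e2] at hcard
    exact hcard
  have hDS : ∀ j, D j ∣ S := fun j =>
    dvd_trans (Finset.dvd_prod_of_mem D (Finset.mem_univ j)) hprodD
  have hGS : ∀ j, G j ∣ S := fun j => Nat.gcd_dvd_right _ _
  -- divisibility chains
  have hDchain : ∀ j k : Fin n, j ≤ k → D j ∣ D k := by
    have h := chain_dvd (fun j : Fin n => B (emb j) j) ?_
    · intro j k hjk
      exact Int.natAbs_dvd_natAbs.mpr (h j k hjk)
    · intro i h1
      exact hB.2.2 (emb ⟨i, Nat.lt_of_succ_lt h1⟩) (emb ⟨i + 1, h1⟩)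
        ⟨i, Nat.lt_of_succ_lt h1⟩ ⟨i + 1, h1⟩ rfl rfl rfl
  have hGchain : ∀ j k : Fin n, j ≤ k → G j ∣ G k := by
    have h := chain_dvd (fun j : Fin n => B' (emb j) j) ?_
    · intro j k hjk
      obtain ⟨t, ht⟩ := h j k hjk
      apply Nat.dvd_gcd _ (Nat.gcd_dvd_right _ _)
      have hv : (B' (emb k) k).val = (B' (emb j) j).val * t.val % S := by
        rw [ht, ZMod.val_mul]
      rw [hv]
      rw [Nat.dvd_mod_iff (Nat.gcd_dvd_right _ _)]
      exact Dvd.dvd.mul_right (Nat.gcd_dvd_left _ _) _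
    · intro i h1
      exact hB'.2 (emb ⟨i, Nat.lt_of_succ_lt h1⟩) (emb ⟨i + 1, h1⟩)
        ⟨i, Nat.lt_of_succ_lt h1⟩ ⟨i + 1, h1⟩ rfl rfl rfl
  -- the key gcd-product identity
  have hkey : ∀ U, U ∣ S → (∏ j, Nat.gcd (D j) U) = ∏ j, Nat.gcd (G j) U := by
    intro U hU
    set c : ℕ := S / U with hcdef
    have hcU : c * U = S := Nat.div_mul_cancel hU
    have hUpos : 0 < U := Nat.pos_of_dvd_of_pos hU hSpos
    have hcpos : 0 < c := Nat.div_pos (Nat.le_of_dvd hSpos hU) hUpos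
    set f : ℤ →+* ZMod S := Int.castRingHom (ZMod S) with hf
    set Am : Matrix (Fin m) (Fin n) (ZMod S) := A.map (Int.cast : ℤ → ZMod S) with hAm
    set Bm : Matrix (Fin m) (Fin n) (ZMod S) := B.map (Int.cast : ℤ → ZMod S) with hBm
    set z : ZMod S := ((c : ℕ) : ZMod S) with hz
    -- mod-S equivalences for the scaled matrices
    have hmapeq : (P.map (Int.cast : ℤ → ZMod S)) * (z • Am) * (Q.map (Int.cast : ℤ → ZMod S))
        = z • Bm := by
      rw [Matrix.mul_smul, Matrix.smul_mul]
      congr 1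
      rw [hAm, hBm, ← hPAQ]
      show P.map f * (A.map f) * Q.map f = (P * A * Q).map f
      rw [Matrix.map_mul, Matrix.map_mul]
    have hmapeq' : P' * (z • Am) * Q' = z • B' := by
      rw [Matrix.mul_smul, Matrix.smul_mul, hPAQ']
    have hPmU : IsUnit (P.map (Int.cast : ℤ → ZMod S)).det := by
      have : (P.map (Int.cast : ℤ → ZMod S)).det = f P.det := (RingHom.map_det f P).symm
      rw [this]
      exact hP.map f
    have hQmU : IsUnit (Q.map (Int.cast : ℤ → ZMod S)).det := by
      have : (Q.map (Int.cast : ℤ → ZMod S)).det = f Q.det := (RingHom.map_det f Q).symm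
      rw [this]
      exact hQ.map f
    have hcount : Nat.card {v : Fin n → ZMod S // (z • Bm).mulVec v = 0}
        = Nat.card {v : Fin n → ZMod S // (z • B').mulVec v = 0} := by
      rw [← hmapeq, ← hmapeq', ker_card_equiv _ _ _ hPmU hQmU, ker_card_equiv _ _ _ hP' hQ']
    have hdiagBm : ∀ (i : Fin m) (j : Fin n), (i : ℕ) ≠ (j : ℕ) → (z • Bm) i j = 0 := by
      intro i j hij
      show z * Bm i j = 0
      rw [hBm]
      show z * ((B i j : ℤ) : ZMod S) = 0
      rw [hB.1 i j hij]
      simp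
    have hdiagB' : ∀ (i : Fin m) (j : Fin n), (i : ℕ) ≠ (j : ℕ) → (z • B') i j = 0 := by
      intro i j hij
      show z * B' i j = 0
      rw [hB'.1 i j hij]
      simp
    have hL := ker_card_diag hSpos hnm (z • Bm) hdiagBm
    have hR := ker_card_diag hSpos hnm (z • B') hdiagB'
    rw [hL, hR] at hcount
    -- rewrite both sides
    have hLc : ∀ j : Fin n,
        Nat.gcd (((z • Bm) ⟨j.val, lt_of_lt_of_le j.isLt hnm⟩ j).val) S = c * Nat.gcd (D j) U := by
      intro j
      have h1 : (z • Bm) ⟨j.val, lt_of_lt_of_le j.isLt hnm⟩ j = ((c * D j : ℕ) : ZMod S) := by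
        show z * Bm (emb j) j = _
        rw [hBm]
        show z * ((B (emb j) j : ℤ) : ZMod S) = _
        rw [← hDcast j]
        push_cast
        ring
      rw [h1, gcd_val_natCast S hSpos]
      conv_lhs => rw [← hcU]
      rw [Nat.gcd_mul_left]
    have hRc : ∀ j : Fin n,
        Nat.gcd (((z • B') ⟨j.val, lt_of_lt_of_le j.isLt hnm⟩ j).val) S = c * Nat.gcd (G j) U := by
      intro j
      have h1 : (z • B') ⟨j.val, lt_of_lt_of_le j.isLt hnm⟩ j
          = ((c * (B' (emb j) j).val : ℕ) : ZMod S) := by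
        show z * B' (emb j) j = _
        conv_lhs => rw [show B' (emb j) j = (((B' (emb j) j).val : ℕ) : ZMod S) by
          rw [ZMod.natCast_val, ZMod.cast_id]]
        push_cast
        ring
      have h2 : Nat.gcd (G j) U = Nat.gcd ((B' (emb j) j).val) U := by
        rw [hGdef]
        simp only []
        rw [Nat.gcd_assoc, Nat.gcd_eq_right hU]
      rw [h1, gcd_val_natCast S hSpos, h2]
      generalize (B' (emb j) j).val = w
      conv_lhs => rw [← hcU]
      rw [Nat.gcd_mul_left]
    rw [Finset.prod_congr rfl (fun j _ => hLc j), Finset.prod_congr rfl (fun j _ => hRc j),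
      Finset.prod_mul_distrib, Finset.prod_mul_distrib, Finset.prod_const]
      at hcount
    exact Nat.eq_of_mul_eq_mul_left (pow_pos hcpos _) hcount
  -- conclude
  have hfinal : ∀ j : Fin n, D j = G j :=
    core_eq n S hSpos D G hDS hGS hDchain hGchain hkey
  intro i j hij
  have hi : i = emb j := Fin.ext hij
  rw [hi, ← hDcast j, hfinal j, hGdef]
end
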